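/- Let H be an N_B×N_A complex matrix, B an N_A×N_s complex matrix, and Γ an N_B×N_B Hermitian positive definite complex matrix. Set M := H·B·Bᴴ·Hᴴ + Γ, C* := M⁻¹·H·B, and for any N_B×N_s complex matrix C define E(C) := (I_{N_s} − Cᴴ·H·B)·(I_{N_s} − Cᴴ·H·B)ᴴ + Cᴴ·Γ·C. Then for every N_s×N_s Hermitian positive semidefinite weight matrix W and every C, Re(Tr(W·E(C*))) ≤ Re(Tr(W·E(C))); that is, the Wiener filter C* minimizes the weighted MSE Tr(W·E(C)) simultaneously for all positive semidefinite weights W. -/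

import Mathlib

open Matrix ComplexOrder

/-- The Wiener filter `C* = M⁻¹·H·B` minimizes the weighted MSE
`Re Tr(W·E(C))` simultaneously for every positive semidefinite weight `W`. -/
theorem wiener_filter_minimizes_weighted_mse (nB nA ns : ℕ)
    (H : Matrix (Fin nB) (Fin nA) ℂ) (B : Matrix (Fin nA) (Fin ns) ℂ)
    (Γ : Matrix (Fin nB) (Fin nB) ℂ) (hΓ : Γ.PosDef)
    (M : Matrix (Fin nB) (Fin nB) ℂ)
    (hM : M = H * B * Bᴴ * Hᴴ + Γ)
    (Cstar : Matrix (Fin nB) (Fin ns) ℂ)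
    (hCstar : Cstar = M⁻¹ * H * B)
    (E : Matrix (Fin nB) (Fin ns) ℂ → Matrix (Fin ns) (Fin ns) ℂ)
    (hE : ∀ C, E C = (1 - Cᴴ * H * B) * (1 - Cᴴ * H * B)ᴴ + Cᴴ * Γ * C) :
    ∀ (W : Matrix (Fin ns) (Fin ns) ℂ), W.PosSemidef →
      ∀ C : Matrix (Fin nB) (Fin ns) ℂ,
        ((W * E Cstar).trace).re ≤ ((W * E C).trace).re := by
  intro W hW C
  set G := H * B with hG
  have hMpd : M.PosDef := by
    rw [hM]
    have h0 : H * B * Bᴴ * Hᴴ = (H * B) * (H * B)ᴴ := by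
      simp [Matrix.conjTranspose_mul, Matrix.mul_assoc]
    rw [h0]
    exact Matrix.PosDef.posSemidef_add (Matrix.posSemidef_self_mul_conjTranspose _) hΓ
  have hMh : Mᴴ = M := hMpd.isHermitian
  have hMinv : M * Cstar = G := by
    rw [hCstar, hG, ← Matrix.mul_assoc, ← Matrix.mul_assoc,
      Matrix.mul_nonsing_inv _ hMpd.det_pos.ne'.isUnit, Matrix.one_mul]
  have hMinv' : Cstarᴴ * M = Gᴴ := by
    have := congrArg conjTranspose hMinv
    simpa [Matrix.conjTranspose_mul, hMh] using this
  have key : ∀ X : Matrix (Fin nB) (Fin ns) ℂ,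
      E X = 1 - Xᴴ * G - Gᴴ * X + Xᴴ * M * X := by
    intro X
    rw [hE, hM, hG]
    simp only [Matrix.conjTranspose_sub, Matrix.conjTranspose_mul,
      Matrix.conjTranspose_one, Matrix.conjTranspose_conjTranspose, Matrix.sub_mul,
      Matrix.mul_sub, Matrix.mul_add, Matrix.add_mul, Matrix.one_mul, Matrix.mul_one,
      Matrix.mul_assoc]
    noncomm_ring
  have e4 : Gᴴ * Cstar = Cstarᴴ * G := by
    rw [← hMinv', Matrix.mul_assoc, hMinv]
  have hdiff : E C = E Cstar + (C - Cstar)ᴴ * M * (C - Cstar) := by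
    have expand : (C - Cstar)ᴴ * M * (C - Cstar)
        = Cᴴ * M * C - Cᴴ * (M * Cstar) - (Cstarᴴ * M) * C + Cstarᴴ * (M * Cstar) := by
      simp only [Matrix.conjTranspose_sub, Matrix.sub_mul, Matrix.mul_sub,
        Matrix.mul_assoc]
      abel
    have h1 : (C - Cstar)ᴴ * M * (C - Cstar)
        = Cᴴ * M * C - Cᴴ * G - Gᴴ * C + Cstarᴴ * G := by
      rw [expand, hMinv, hMinv']
    rw [key C, key Cstar, h1]
    have h2 : Cstarᴴ * M * Cstar = Cstarᴴ * G := by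
      rw [Matrix.mul_assoc, hMinv]
    rw [h2, ← e4]
    noncomm_ring
  -- reduce to nonnegativity of trace of product of psd matrices
  have hpsd : ((C - Cstar)ᴴ * M * (C - Cstar)).PosSemidef :=
    hMpd.posSemidef.conjTranspose_mul_mul_same _
  rw [hdiff, Matrix.mul_add, Matrix.trace_add, Complex.add_re, le_add_iff_nonneg_right]
  -- trace of W * psd has nonneg real part
  obtain ⟨S, hS⟩ : ∃ S : Matrix (Fin ns) (Fin ns) ℂ, _ = Sᴴ * S := by
    open scoped MatrixOrder Matrix.Norms.L2Operator in
    exact CStarAlgebra.nonneg_iff_eq_star_mul_self.mp hW.nonneg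
  obtain ⟨T, hT⟩ : ∃ T : Matrix (Fin ns) (Fin ns) ℂ, _ = Tᴴ * T := by
    open scoped MatrixOrder Matrix.Norms.L2Operator in
    exact CStarAlgebra.nonneg_iff_eq_star_mul_self.mp hpsd.nonneg
  rw [hS, hT]
  have tr_eq : (Sᴴ * S * (Tᴴ * T)).trace = ((S * Tᴴ)ᴴ * (S * Tᴴ)).trace := by
    rw [Matrix.conjTranspose_mul, Matrix.conjTranspose_conjTranspose]
    conv_rhs => rw [Matrix.mul_assoc, Matrix.trace_mul_comm]
    simp only [Matrix.mul_assoc]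
  rw [tr_eq, Matrix.trace, Complex.re_sum]
  apply Finset.sum_nonneg
  intro i _
  rw [Matrix.diag_apply, Matrix.mul_apply, Complex.re_sum]
  apply Finset.sum_nonneg
  intro j _
  rw [Matrix.conjTranspose_apply, Complex.star_def, mul_comm, Complex.mul_conj]
  simpa using Complex.normSq_nonneg _
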